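/- (Matrix-Tree theorem, multivariate form) Let L be the N × N weighted Laplacian matrix with off-diagonal entries L_{ij} = -w_{ij} and diagonal entries L_{ii} = Σ_{k≠i} w_{ik}, where w_{ij} = w_{ji} are commuting indeterminates. Then for any i_0, the determinant of the principal minor L(i_0) obtained by deleting row and column i_0 equals the sum over all spanning trees T of the complete graph on N vertices of the product Π_{{i,j} ∈ E(T)} w_{ij}. -/

import Mathlib

open scoped Classical
open Finset

namespace MTaux

variable {m : ℕ}

/-- The "next" (parent) map on `Fin (m+1)` determined by `g : Fin m → Fin (m+1)`:
vertex `i0.succAbove a` maps to `g a`, and `i0` maps to itself. -/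
noncomputable def nxt (i0 : Fin (m + 1)) (g : Fin m → Fin (m + 1)) (v : Fin (m + 1)) :
    Fin (m + 1) :=
  if h : ∃ a, i0.succAbove a = v then g h.choose else i0

lemma nxt_i0 (i0 : Fin (m + 1)) (g : Fin m → Fin (m + 1)) : nxt i0 g i0 = i0 := by
  rw [nxt, dif_neg]
  rintro ⟨a, ha⟩
  exact Fin.succAbove_ne i0 a ha

lemma nxt_succAbove (i0 : Fin (m + 1)) (g : Fin m → Fin (m + 1)) (a : Fin m) :
    nxt i0 g (i0.succAbove a) = g a := by
  have h : ∃ b, i0.succAbove b = i0.succAbove a := ⟨a, rfl⟩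
  rw [nxt, dif_pos h]
  congr 1
  exact Fin.succAbove_right_injective h.choose_spec

lemma iterate_nxt_i0 (i0 : Fin (m + 1)) (g : Fin m → Fin (m + 1)) (k : ℕ) :
    (nxt i0 g)^[k] i0 = i0 :=
  Function.iterate_fixed (nxt_i0 i0 g) k

lemma iterate_absorb {i0 : Fin (m + 1)} {g : Fin m → Fin (m + 1)} {v : Fin (m + 1)} {k n : ℕ}
    (h : (nxt i0 g)^[k] v = i0) (hkn : k ≤ n) : (nxt i0 g)^[n] v = i0 := by
  obtain ⟨j, rfl⟩ := Nat.exists_eq_add_of_le hkn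
  rw [Nat.add_comm k j, Function.iterate_add_apply, h, iterate_nxt_i0]

/-- `g` is good if iterating `nxt` from any vertex reaches `i0`. -/
def Good (i0 : Fin (m + 1)) (g : Fin m → Fin (m + 1)) : Prop :=
  ∀ v, (nxt i0 g)^[m] v = i0
def Q (i0 : Fin (m + 1)) (g : Fin m → Fin (m + 1)) (π : Equiv.Perm (Fin m)) : Prop :=
  (∀ a, g a ≠ i0.succAbove a) ∧ ∀ a, π a ≠ a → g a = i0.succAbove (π a)

noncomputable def nonfix (π : Equiv.Perm (Fin m)) : ℕ :=
  #(univ.filter fun a => π a ≠ a)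

noncomputable def E (R : Type*) [CommRing R] (π : Equiv.Perm (Fin m)) : R :=
  ((Equiv.Perm.sign π : ℤ) : R) * (-1) ^ nonfix π

variable {R : Type*} [CommRing R]

noncomputable def cf (i0 : Fin (m + 1)) (w : Fin (m + 1) → Fin (m + 1) → R)
    (π : Equiv.Perm (Fin m)) (a : Fin m) (k : Fin (m + 1)) : R :=
  if π a = a then (if k = i0.succAbove a then 0 else w (i0.succAbove a) k)
  else (if k = i0.succAbove (π a) then -w (i0.succAbove a) k else 0)

lemma cf_prod (i0 : Fin (m + 1)) (w : Fin (m + 1) → Fin (m + 1) → R)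
    (π : Equiv.Perm (Fin m)) (g : Fin m → Fin (m + 1)) :
    (∏ a, cf i0 w π a (g a)) =
      if Q i0 g π then ((-1 : R)) ^ nonfix π * ∏ a, w (i0.succAbove a) (g a) else 0 := by
  by_cases hQ : Q i0 g π
  · rw [if_pos hQ]
    have : ∀ a, cf i0 w π a (g a) =
        (if π a = a then (1 : R) else -1) * w (i0.succAbove a) (g a) := by
      intro a
      by_cases hfa : π a = a
      · rw [cf, if_pos hfa, if_neg (hQ.1 a), if_pos hfa, one_mul]
      · rw [cf, if_neg hfa, if_pos (hQ.2 a hfa), if_neg hfa, neg_mul, one_mul]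
    rw [Finset.prod_congr rfl fun a _ => this a, Finset.prod_mul_distrib]
    congr 1
    rw [← Finset.prod_filter_mul_prod_filter_not univ (fun a => π a = a)]
    rw [Finset.prod_congr rfl (fun a ha => if_pos (Finset.mem_filter.1 ha).2),
      Finset.prod_congr rfl (fun a ha => if_neg (Finset.mem_filter.1 ha).2),
      Finset.prod_const_one, one_mul, Finset.prod_const, nonfix]
  · rw [if_neg hQ]
    rw [Q, not_and_or] at hQ
    rcases hQ with hQ | hQ
    · push_neg at hQ
      obtain ⟨a, ha⟩ := hQ
      refine Finset.prod_eq_zero (Finset.mem_univ a) ?_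
      by_cases hfa : π a = a
      · rw [cf, if_pos hfa, if_pos ha]
      · rw [cf, if_neg hfa, if_neg]
        rw [ha]
        exact fun h => hfa (Fin.succAbove_right_injective h.symm)
    · push_neg at hQ
      obtain ⟨a, ha1, ha2⟩ := hQ
      refine Finset.prod_eq_zero (Finset.mem_univ a) ?_
      rw [cf, if_neg ha1, if_neg ha2]

lemma entry_eq_sum (i0 : Fin (m + 1)) (w : Fin (m + 1) → Fin (m + 1) → R)
    (π : Equiv.Perm (Fin m)) (a : Fin m) :
    (Matrix.of (fun i j : Fin (m + 1) =>
        if i = j then ∑ k ∈ Finset.univ.erase i, w i k else - w i j))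
      (i0.succAbove a) (i0.succAbove (π a)) = ∑ k, cf i0 w π a k := by
  by_cases hfa : π a = a
  · rw [Matrix.of_apply, if_pos (by rw [hfa])]
    have h0 : ∀ k ∈ univ.erase (i0.succAbove a), w (i0.succAbove a) k = cf i0 w π a k := by
      intro k hk
      rw [cf, if_pos hfa, if_neg (Finset.ne_of_mem_erase hk)]
    rw [Finset.sum_congr rfl h0]
    rw [← Finset.add_sum_erase univ (cf i0 w π a) (Finset.mem_univ (i0.succAbove a))]
    rw [cf, if_pos hfa, if_pos rfl, zero_add]
  · rw [Matrix.of_apply, if_neg (fun h => hfa (Fin.succAbove_right_injective h).symm)]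
    have : ∀ k, cf i0 w π a k = if k = i0.succAbove (π a) then -w (i0.succAbove a) k else 0 := by
      intro k; rw [cf, if_neg hfa]
    rw [Finset.sum_congr rfl fun k _ => this k, Finset.sum_ite_eq' univ _
      (fun k => -w (i0.succAbove a) k), if_pos (Finset.mem_univ _)]

lemma det_expand (i0 : Fin (m + 1)) (w : Fin (m + 1) → Fin (m + 1) → R) :
    Matrix.det
      ((Matrix.of (fun i j : Fin (m + 1) =>
        if i = j then ∑ k ∈ Finset.univ.erase i, w i k else - w i j)).submatrix
          i0.succAbove i0.succAbove)
      = ∑ g : Fin m → Fin (m + 1), ∑ π : Equiv.Perm (Fin m),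
          (if Q i0 g π then E R π * ∏ a, w (i0.succAbove a) (g a) else 0) := by
  rw [← Matrix.det_transpose, Matrix.det_apply']
  rw [Finset.sum_comm]
  refine Finset.sum_congr rfl fun π _ => ?_
  have h1 : ∀ a : Fin m, ((Matrix.of (fun i j : Fin (m + 1) =>
        if i = j then ∑ k ∈ Finset.univ.erase i, w i k else - w i j)).submatrix
          i0.succAbove i0.succAbove).transpose (π a) a = ∑ k, cf i0 w π a k := by
    intro a
    rw [Matrix.transpose_apply, Matrix.submatrix_apply]
    exact entry_eq_sum i0 w π a
  rw [Finset.prod_congr rfl fun a _ => h1 a, Finset.prod_univ_sum, Fintype.piFinset_univ,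
    Finset.mul_sum]
  refine Finset.sum_congr rfl fun g _ => ?_
  rw [cf_prod, mul_ite, mul_zero, E]
  by_cases hQ : Q i0 g π
  · rw [if_pos hQ, if_pos hQ, mul_assoc]
  · rw [if_neg hQ, if_neg hQ]

lemma good_ne (i0 : Fin (m + 1)) {g : Fin m → Fin (m + 1)} (hGood : Good i0 g) (a : Fin m) :
    g a ≠ i0.succAbove a := by
  intro h
  have hfix : nxt i0 g (i0.succAbove a) = i0.succAbove a := by rw [nxt_succAbove, h]
  have := hGood (i0.succAbove a)
  rw [Function.iterate_fixed hfix] at this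
  exact Fin.succAbove_ne i0 a this

lemma q_eq_one {i0 : Fin (m + 1)} {g : Fin m → Fin (m + 1)} {π : Equiv.Perm (Fin m)}
    (hGood : Good i0 g) (hQ : Q i0 g π) : π = 1 := by
  by_contra hne
  obtain ⟨a, ha⟩ : ∃ a, π a ≠ a := by
    by_contra h
    push_neg at h
    exact hne (Equiv.ext h)
  have key : ∀ k : ℕ, (nxt i0 g)^[k] (i0.succAbove a) = i0.succAbove ((π ^ k) a) ∧
      π ((π ^ k) a) ≠ (π ^ k) a := by
    intro k
    induction k with
    | zero => simpa using ha
    | succ k ih =>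
      obtain ⟨h1, h2⟩ := ih
      constructor
      · rw [Function.iterate_succ_apply', h1, nxt_succAbove, hQ.2 _ h2]
        congr 1
        rw [pow_succ', Equiv.Perm.mul_apply]
      · rw [pow_succ', Equiv.Perm.mul_apply]
        intro h
        exact h2 (π.injective h)
  have := (key m).1
  rw [hGood (i0.succAbove a)] at this
  exact Fin.succAbove_ne i0 _ this.symm

lemma sum_perm_good (R : Type*) [CommRing R] {i0 : Fin (m + 1)} {g : Fin m → Fin (m + 1)}
    (hGood : Good i0 g) :
    ∑ π : Equiv.Perm (Fin m), (if Q i0 g π then E R π else 0) = 1 := by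
  rw [Finset.sum_eq_single_of_mem 1 (Finset.mem_univ _)]
  · rw [if_pos ⟨good_ne i0 hGood, fun a h => absurd rfl h⟩]
    rw [E, nonfix]
    have : (univ.filter fun a => (1 : Equiv.Perm (Fin m)) a ≠ a) = ∅ := by
      refine Finset.filter_false_of_mem fun a _ => ?_
      simp
    rw [this]
    simp
  · intro π _ hπ
    rw [if_neg fun hQ => hπ (q_eq_one hGood hQ)]

/-- Partial inverse of `i0.succAbove`. -/
noncomputable def pin [NeZero m] (i0 : Fin (m + 1)) (v : Fin (m + 1)) : Fin m :=
  if h : ∃ a, i0.succAbove a = v then h.choose else ⟨0, Nat.pos_of_ne_zero (NeZero.ne m)⟩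

lemma pin_succAbove [NeZero m] (i0 : Fin (m + 1)) (a : Fin m) :
    pin i0 (i0.succAbove a) = a := by
  have h : ∃ b, i0.succAbove b = i0.succAbove a := ⟨a, rfl⟩
  rw [pin, dif_pos h]
  exact Fin.succAbove_right_injective h.choose_spec

lemma succAbove_pin [NeZero m] (i0 : Fin (m + 1)) {v : Fin (m + 1)} (hv : v ≠ i0) :
    i0.succAbove (pin i0 v) = v := by
  have h : ∃ a, i0.succAbove a = v := Fin.exists_succAbove_eq hv
  rw [pin, dif_pos h, h.choose_spec]

/-- The cycle of `u0` (of period `ℓ`) as a finset. -/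
noncomputable def cyc (i0 : Fin (m + 1)) (g : Fin m → Fin (m + 1)) (u0 : Fin (m + 1))
    (ℓ : ℕ) : Finset (Fin (m + 1)) :=
  (Finset.range ℓ).image fun j => (nxt i0 g)^[j] u0

section CycleFacts

variable {i0 : Fin (m + 1)} {g : Fin m → Fin (m + 1)} {u0 : Fin (m + 1)} {ℓ : ℕ}
variable (hℓpos : 0 < ℓ) (hℓfix : (nxt i0 g)^[ℓ] u0 = u0)

include hℓpos hℓfix

lemma mem_cyc_iterate (j : ℕ) : (nxt i0 g)^[j] u0 ∈ cyc i0 g u0 ℓ := by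
  induction j using Nat.strong_induction_on with
  | _ j ih =>
    by_cases hj : j < ℓ
    · exact Finset.mem_image_of_mem _ (Finset.mem_range.2 hj)
    · have : (nxt i0 g)^[j] u0 = (nxt i0 g)^[j - ℓ] u0 := by
        conv_lhs => rw [show j = (j - ℓ) + ℓ by omega, Function.iterate_add_apply, hℓfix]
      rw [this]
      exact ih _ (by omega)

lemma u0_mem_cyc : u0 ∈ cyc i0 g u0 ℓ := by
  simpa using mem_cyc_iterate hℓpos hℓfix 0

lemma cyc_mem_nxt {v : Fin (m + 1)} (hv : v ∈ cyc i0 g u0 ℓ) :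
    nxt i0 g v ∈ cyc i0 g u0 ℓ := by
  obtain ⟨j, _, rfl⟩ := Finset.mem_image.1 hv
  rw [← Function.iterate_succ_apply' (nxt i0 g) j u0]
  exact mem_cyc_iterate hℓpos hℓfix _

lemma cyc_mem_iterate {v : Fin (m + 1)} (hv : v ∈ cyc i0 g u0 ℓ) (k : ℕ) :
    (nxt i0 g)^[k] v ∈ cyc i0 g u0 ℓ := by
  induction k with
  | zero => simpa using hv
  | succ k ih =>
    rw [Function.iterate_succ_apply']
    exact cyc_mem_nxt hℓpos hℓfix ih

lemma cyc_fix {v : Fin (m + 1)} (hv : v ∈ cyc i0 g u0 ℓ) :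
    (nxt i0 g)^[ℓ] v = v := by
  obtain ⟨j, _, rfl⟩ := Finset.mem_image.1 hv
  rw [← Function.iterate_add_apply, Nat.add_comm ℓ j, Function.iterate_add_apply, hℓfix]

lemma cyc_ne_i0 (hu : u0 ≠ i0) {v : Fin (m + 1)} (hv : v ∈ cyc i0 g u0 ℓ) : v ≠ i0 := by
  obtain ⟨j, hj, rfl⟩ := Finset.mem_image.1 hv
  rw [Finset.mem_range] at hj
  intro h
  apply hu
  calc u0 = (nxt i0 g)^[ℓ] u0 := hℓfix.symm
    _ = (nxt i0 g)^[ℓ - j] ((nxt i0 g)^[j] u0) := by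
        rw [← Function.iterate_add_apply]; congr 1; omega
    _ = i0 := by rw [h, iterate_nxt_i0]

lemma cyc_trans {v v' : Fin (m + 1)} (hv : v ∈ cyc i0 g u0 ℓ) (hv' : v' ∈ cyc i0 g u0 ℓ) :
    ∃ k, (nxt i0 g)^[k] v = v' := by
  obtain ⟨i, hi, rfl⟩ := Finset.mem_image.1 hv
  obtain ⟨j, hj, rfl⟩ := Finset.mem_image.1 hv'
  rw [Finset.mem_range] at hi hj
  rcases le_or_gt i j with h | h
  · exact ⟨j - i, by rw [← Function.iterate_add_apply]; congr 1; omega⟩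
  · refine ⟨j + ℓ - i, ?_⟩
    rw [← Function.iterate_add_apply]
    rw [show j + ℓ - i + i = j + ℓ by omega]
    rw [Function.iterate_add_apply, hℓfix]

lemma card_cyc (hℓmin : ∀ j, 0 < j → j < ℓ → (nxt i0 g)^[j] u0 ≠ u0) :
    (cyc i0 g u0 ℓ).card = ℓ := by
  have key : ∀ i j, i < j → j < ℓ → (nxt i0 g)^[i] u0 = (nxt i0 g)^[j] u0 → False := by
    intro i j hlt hj hij
    apply hℓmin (ℓ - j + i) (by omega) (by omega)
    calc (nxt i0 g)^[ℓ - j + i] u0 = (nxt i0 g)^[ℓ - j] ((nxt i0 g)^[i] u0) :=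
        Function.iterate_add_apply _ _ _ _
      _ = (nxt i0 g)^[ℓ - j] ((nxt i0 g)^[j] u0) := by rw [hij]
      _ = (nxt i0 g)^[ℓ] u0 := by rw [← Function.iterate_add_apply]; congr 1; omega
      _ = u0 := hℓfix
  rw [cyc, Finset.card_image_of_injOn, Finset.card_range]
  intro i hi j hj hij
  rw [Finset.mem_coe, Finset.mem_range] at hi hj
  by_contra hne
  rcases Nat.lt_or_ge i j with h | h
  · exact key i j h hj hij
  · exact key j i (by omega) hi hij.symm

end CycleFacts

lemma exists_cyclic {i0 : Fin (m + 1)} {g : Fin m → Fin (m + 1)} (hng : ¬Good i0 g) :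
    ∃ u, u ≠ i0 ∧ ∃ k, 0 < k ∧ (nxt i0 g)^[k] u = u := by
  rw [Good] at hng
  push_neg at hng
  obtain ⟨v, hv⟩ := hng
  obtain ⟨i', j', hne, heq⟩ := Fintype.exists_ne_map_eq_of_card_lt
    (fun j : Fin (m + 2) => (nxt i0 g)^[(j : ℕ)] v) (by simp)
  have key : ∀ i j : Fin (m + 2), (i : ℕ) < (j : ℕ) →
      (nxt i0 g)^[(i : ℕ)] v = (nxt i0 g)^[(j : ℕ)] v →
      ∃ u, u ≠ i0 ∧ ∃ k, 0 < k ∧ (nxt i0 g)^[k] u = u := by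
    intro i j hlt heq
    refine ⟨(nxt i0 g)^[(i : ℕ)] v, ?_, (j : ℕ) - (i : ℕ), by omega, ?_⟩
    · intro h
      apply hv
      refine iterate_absorb (k := (i : ℕ)) h ?_
      have := j.isLt
      omega
    · rw [← Function.iterate_add_apply]
      rw [show (j : ℕ) - (i : ℕ) + (i : ℕ) = (j : ℕ) by omega, heq]
  rcases Nat.lt_or_ge (i' : ℕ) (j' : ℕ) with h | h
  · exact key i' j' h heq
  · exact key j' i' (by have := Fin.val_ne_iff.mpr hne; omega) heq.symm


lemma sum_perm_not_good (R : Type*) [CommRing R] [NeZero m] {i0 : Fin (m + 1)}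
    {g : Fin m → Fin (m + 1)} (hng : ¬Good i0 g) :
    ∑ π : Equiv.Perm (Fin m), (if Q i0 g π then E R π else 0) = 0 := by
  by_cases hg : ∀ a, g a ≠ i0.succAbove a
  swap
  · exact Finset.sum_eq_zero fun π _ => if_neg fun hQ => hg hQ.1
  obtain ⟨u0, hu, hcyc⟩ := exists_cyclic hng
  set F := nxt i0 g with hF
  set ℓ := Nat.find hcyc with hℓdef
  obtain ⟨hℓpos, hℓfix⟩ := Nat.find_spec hcyc
  have hℓmin : ∀ j, 0 < j → j < ℓ → F^[j] u0 ≠ u0 := fun j h1 h2 hj =>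
    Nat.find_min hcyc h2 ⟨h1, hj⟩
  set K := cyc i0 g u0 ℓ with hK
  have hKnxt : ∀ v ∈ K, F v ∈ K := fun v hv => cyc_mem_nxt hℓpos hℓfix hv
  have hKiter : ∀ v ∈ K, ∀ k, F^[k] v ∈ K := fun v hv k => cyc_mem_iterate hℓpos hℓfix hv k
  have hKfix : ∀ v ∈ K, F^[ℓ] v = v := fun v hv => cyc_fix hℓpos hℓfix hv
  have hKne : ∀ v ∈ K, v ≠ i0 := fun v hv => cyc_ne_i0 hℓpos hℓfix hu hv
  have hu0K : u0 ∈ K := u0_mem_cyc hℓpos hℓfix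
  have hcard : K.card = ℓ := card_cyc hℓpos hℓfix hℓmin
  have hKmove : ∀ v ∈ K, F v ≠ v := by
    intro v hv hfv
    obtain ⟨a, rfl⟩ := Fin.exists_succAbove_eq (hKne v hv)
    rw [hF, nxt_succAbove] at hfv
    exact hg a hfv
  -- the cycle permutation C
  set cfn : Fin m → Fin m :=
    fun a => if i0.succAbove a ∈ K then pin i0 (F (i0.succAbove a)) else a with hcfn
  set cin : Fin m → Fin m :=
    fun a => if i0.succAbove a ∈ K then pin i0 (F^[ℓ-1] (i0.succAbove a)) else a with hcin
  have hpinK : ∀ v ∈ K, i0.succAbove (pin i0 v) = v := fun v hv => succAbove_pin i0 (hKne v hv)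
  have Cleft : Function.LeftInverse cin cfn := by
    intro a
    by_cases h : i0.succAbove a ∈ K
    · have h1 : F (i0.succAbove a) ∈ K := hKnxt _ h
      have h2 : i0.succAbove (cfn a) = F (i0.succAbove a) := by
        rw [hcfn]; simp only [if_pos h]; exact hpinK _ h1
      rw [hcin]
      simp only [h2, if_pos h1]
      rw [← Function.iterate_succ_apply F (ℓ - 1) (i0.succAbove a),
        show (ℓ - 1).succ = ℓ from by omega, hKfix _ h, pin_succAbove]
    · rw [hcin, hcfn]; simp only [if_neg h]
  have Cright : Function.RightInverse cin cfn := by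
    intro a
    by_cases h : i0.succAbove a ∈ K
    · have h1 : F^[ℓ-1] (i0.succAbove a) ∈ K := hKiter _ h _
      have h2 : i0.succAbove (cin a) = F^[ℓ-1] (i0.succAbove a) := by
        rw [hcin]; simp only [if_pos h]; exact hpinK _ h1
      rw [hcfn]
      simp only [h2, if_pos h1]
      rw [← Function.iterate_succ_apply' F (ℓ - 1) (i0.succAbove a),
        show (ℓ - 1).succ = ℓ from by omega, hKfix _ h, pin_succAbove]
    · rw [hcin, hcfn]; simp only [if_neg h]
  set C : Equiv.Perm (Fin m) := ⟨cfn, cin, Cleft, Cright⟩ with hC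
  have hCapply : ∀ a, C a = cfn a := fun a => rfl
  have hCinvapply : ∀ a, C⁻¹ a = cin a := fun a => rfl
  have hCK : ∀ a, i0.succAbove a ∈ K → i0.succAbove (C a) = F (i0.succAbove a) := by
    intro a h
    rw [hCapply, hcfn]; simp only [if_pos h]; exact hpinK _ (hKnxt _ h)
  have hCid : ∀ a, i0.succAbove a ∉ K → C a = a := by
    intro a h; rw [hCapply, hcfn]; simp only [if_neg h]
  have hCinvid : ∀ a, i0.succAbove a ∉ K → C⁻¹ a = a := by
    intro a h; rw [hCinvapply, hcin]; simp only [if_neg h]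
  have hCinvK : ∀ a, i0.succAbove a ∈ K → i0.succAbove (C⁻¹ a) = F^[ℓ-1] (i0.succAbove a) := by
    intro a h
    rw [hCinvapply, hcin]; simp only [if_pos h]; exact hpinK _ (hKiter _ h _)
  have hCne : ∀ a, i0.succAbove a ∈ K → C a ≠ a := by
    intro a h hCa
    apply hKmove _ h
    rw [← hCK a h, hCa]
  have hCmoves : ∀ a, C a ≠ a ↔ i0.succAbove a ∈ K := by
    intro a
    constructor
    · intro h
      by_contra hn
      exact h (hCid a hn)
    · exact hCne a
  have hsupp : C.support = univ.filter (fun a => i0.succAbove a ∈ K) := by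
    ext a
    rw [Equiv.Perm.mem_support, Finset.mem_filter, hCmoves]
    simp
  have hfiltcard : (univ.filter (fun a => i0.succAbove a ∈ K)).card = ℓ := by
    rw [← hcard]
    apply Finset.card_bij (fun a _ => i0.succAbove a)
    · intro a ha; exact (Finset.mem_filter.1 ha).2
    · intro a _ b _ h; exact Fin.succAbove_right_injective h
    · intro v hv
      exact ⟨pin i0 v, Finset.mem_filter.2 ⟨Finset.mem_univ _, by rw [hpinK v hv]; exact hv⟩,
        hpinK v hv⟩
  have hsuppcard : C.support.card = ℓ := by rw [hsupp, hfiltcard]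
  have hCiter : ∀ j : ℕ, (C ^ j) (pin i0 u0) = pin i0 (F^[j] u0) := by
    intro j
    induction j with
    | zero => simp
    | succ j ih =>
      have hmem : F^[j] u0 ∈ K := hKiter _ hu0K j
      rw [pow_succ', Equiv.Perm.mul_apply, ih, hCapply, hcfn]
      simp only [hpinK _ hmem, if_pos hmem]
      rw [Function.iterate_succ_apply']
  have hCisC : C.IsCycle := by
    refine ⟨pin i0 u0, ?_, ?_⟩
    · apply hCne
      rw [hpinK _ hu0K]
      exact hu0K
    · intro y hy
      have hyK : i0.succAbove y ∈ K := (hCmoves y).1 hy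
      obtain ⟨j, hj, hjy⟩ := Finset.mem_image.1 hyK
      refine ⟨(j : ℤ), ?_⟩
      rw [zpow_natCast, hCiter j, hjy, pin_succAbove]
  have hsign : Equiv.Perm.sign C = -(-1) ^ ℓ := by rw [hCisC.sign, hsuppcard]
  have hCne1 : C ≠ 1 := by
    intro h
    apply hCne (pin i0 u0) (by rw [hpinK _ hu0K]; exact hu0K)
    rw [h]; rfl
  -- sign/E computation
  have hpow1 : (-1 : R) ^ ℓ * (-1) ^ ℓ = 1 := by
    rw [← pow_add]
    exact Even.neg_one_pow ⟨ℓ, rfl⟩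
  have Ekey : ∀ τ : Equiv.Perm (Fin m), (∀ a, i0.succAbove a ∈ K → τ a = a) →
      E R (τ * C) = -E R τ := by
    intro τ hτ
    have hnf : nonfix (τ * C) = nonfix τ + ℓ := by
      have hset : (univ.filter fun a => (τ * C) a ≠ a) =
          (univ.filter fun a => τ a ≠ a) ∪ (univ.filter fun a => i0.succAbove a ∈ K) := by
        ext a
        simp only [Finset.mem_filter, Finset.mem_union, Finset.mem_univ, true_and]
        simp only [Equiv.Perm.mul_apply]
        by_cases h : i0.succAbove a ∈ K
        · have h2 : i0.succAbove (C a) ∈ K := by rw [hCK a h]; exact hKnxt _ h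
          have h3 : τ (C a) = C a := hτ _ h2
          simp only [h3, h, or_true, iff_true]
          exact hCne a h
        · rw [hCid a h]
          simp [h]
      have hdisj : Disjoint (univ.filter fun a => τ a ≠ a)
          (univ.filter fun a => i0.succAbove a ∈ K) := by
        rw [Finset.disjoint_left]
        intro a ha1 ha2
        exact (Finset.mem_filter.1 ha1).2 (hτ a (Finset.mem_filter.1 ha2).2)
      rw [nonfix, nonfix, hset, Finset.card_union_of_disjoint hdisj, hfiltcard]
    have hsm : ((Equiv.Perm.sign (τ * C) : ℤ) : R) =
        ((Equiv.Perm.sign τ : ℤ) : R) * (-(-1) ^ ℓ) := by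
      rw [Equiv.Perm.sign_mul, hsign]
      push_cast
      ring
    rw [E, E, hnf, hsm, pow_add]
    linear_combination (-(((Equiv.Perm.sign τ : ℤ) : R) * (-1) ^ nonfix τ)) * hpow1
  -- dichotomy
  have D0 : ∀ (π : Equiv.Perm (Fin m)), Q i0 g π → ∀ (k : ℕ) (b : Fin m),
      i0.succAbove b ∈ K → π (pin i0 (F^[k] (i0.succAbove b))) = pin i0 (F^[k] (i0.succAbove b)) →
      π b = b := by
    intro π hQ k
    induction k with
    | zero =>
      intro b hb h
      rwa [Function.iterate_zero_apply, pin_succAbove] at h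
    | succ k ih =>
      intro b hb h
      have hcK : F (i0.succAbove b) ∈ K := hKnxt _ hb
      have hb' : i0.succAbove (pin i0 (F (i0.succAbove b))) ∈ K := by
        rw [hpinK _ hcK]; exact hcK
      have hfix' : π (pin i0 (F (i0.succAbove b))) = pin i0 (F (i0.succAbove b)) := by
        apply ih _ hb'
        rw [hpinK _ hcK, ← Function.iterate_succ_apply]
        exact h
      by_contra hbne
      have h1 : g b = i0.succAbove (π b) := hQ.2 b hbne
      have h2 : i0.succAbove (π b) = F (i0.succAbove b) := by
        rw [← h1, hF, nxt_succAbove]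
      have h3 : π b = pin i0 (F (i0.succAbove b)) := by
        rw [← h2, pin_succAbove]
      rw [← hfix'] at h3
      have := π.injective h3
      rw [this] at hbne
      exact hbne hfix'
  have dich : ∀ (π : Equiv.Perm (Fin m)), Q i0 g π →
      (∀ a, i0.succAbove a ∈ K → π a = a) ∨ (∀ a, i0.succAbove a ∈ K → π a = C a) := by
    intro π hQ
    by_cases hfix : ∃ a, i0.succAbove a ∈ K ∧ π a = a
    · left
      obtain ⟨a0, ha0, ha0fix⟩ := hfix
      intro a ha
      obtain ⟨k, hk⟩ := cyc_trans hℓpos hℓfix ha ha0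
      refine D0 π hQ k a ha ?_
      rw [hk, pin_succAbove]
      exact ha0fix
    · right
      push_neg at hfix
      intro a ha
      have hMove : π a ≠ a := hfix a ha
      have h1 : g a = i0.succAbove (π a) := hQ.2 a hMove
      apply Fin.succAbove_right_injective
      show i0.succAbove (π a) = i0.succAbove (C a)
      rw [← h1, hCK a ha, hF, nxt_succAbove]
  -- Q-preservation
  have QC1 : ∀ π, Q i0 g π → (∀ a, i0.succAbove a ∈ K → π a = a) → Q i0 g (π * C) := by
    intro π hQ hfix
    refine ⟨hg, fun a ha => ?_⟩
    rw [Equiv.Perm.mul_apply] at ha ⊢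
    by_cases h : i0.succAbove a ∈ K
    · have h2 : i0.succAbove (C a) ∈ K := by rw [hCK a h]; exact hKnxt _ h
      rw [hfix _ h2]
      rw [hCK a h, hF, nxt_succAbove]
    · rw [hCid a h] at ha ⊢
      exact hQ.2 a ha
  have QC2 : ∀ π, Q i0 g π → (∀ a, i0.succAbove a ∈ K → π a = C a) → Q i0 g (π * C⁻¹) := by
    intro π hQ hmv
    refine ⟨hg, fun a ha => ?_⟩
    rw [Equiv.Perm.mul_apply] at ha ⊢
    by_cases h : i0.succAbove a ∈ K
    · exfalso
      have h2 : i0.succAbove (C⁻¹ a) ∈ K := by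
        rw [hCinvK a h]
        exact hKiter _ h _
      rw [hmv _ h2, ← Equiv.Perm.mul_apply, mul_inv_cancel, Equiv.Perm.one_apply] at ha
      exact ha rfl
    · rw [hCinvid a h] at ha ⊢
      exact hQ.2 a ha
  have hτfix : ∀ π, (∀ a, i0.succAbove a ∈ K → π a = C a) →
      (∀ a, i0.succAbove a ∈ K → (π * C⁻¹) a = a) := by
    intro π hmv a ha
    rw [Equiv.Perm.mul_apply]
    have h2 : i0.succAbove (C⁻¹ a) ∈ K := by
      rw [hCinvK a ha]
      exact hKiter _ ha _
    rw [hmv _ h2, ← Equiv.Perm.mul_apply, mul_inv_cancel, Equiv.Perm.one_apply]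
  -- the involution
  set ι : Equiv.Perm (Fin m) → Equiv.Perm (Fin m) := fun π =>
    if h : Q i0 g π then
      (if ∀ a, i0.succAbove a ∈ K → π a = a then π * C else π * C⁻¹)
    else π with hι
  have hpinu0K : i0.succAbove (pin i0 u0) ∈ K := by rw [hpinK _ hu0K]; exact hu0K
  refine Finset.sum_ninvolution ι ?_ ?_ (fun π => Finset.mem_univ _) ?_
  · -- f a + f (ι a) = 0
    intro π
    by_cases hQ : Q i0 g π
    · rw [hι]
      simp only [dif_pos hQ]
      by_cases hfix : ∀ a, i0.succAbove a ∈ K → π a = a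
      · rw [if_pos hfix, if_pos hQ, if_pos (QC1 π hQ hfix), Ekey π hfix]
        ring
      · have hmv : ∀ a, i0.succAbove a ∈ K → π a = C a := (dich π hQ).resolve_left hfix
        rw [if_neg hfix, if_pos hQ, if_pos (QC2 π hQ hmv)]
        have hπeq : (π * C⁻¹) * C = π := by group
        have := Ekey (π * C⁻¹) (hτfix π hmv)
        rw [hπeq] at this
        rw [this]
        ring
    · rw [hι]
      simp only [dif_neg hQ, if_neg hQ, add_zero]
  · -- f a ≠ 0 → ι a ≠ a
    intro π hne
    have hQ : Q i0 g π := by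
      by_contra h
      rw [if_neg h] at hne
      exact hne rfl
    rw [hι]
    simp only [dif_pos hQ]
    by_cases hfix : ∀ a, i0.succAbove a ∈ K → π a = a
    · rw [if_pos hfix]
      intro h
      exact hCne1 (mul_left_cancel (a := π) (by rw [h, mul_one]))
    · rw [if_neg hfix]
      intro h
      have : C⁻¹ = 1 := mul_left_cancel (a := π) (by rw [h, mul_one])
      exact hCne1 (by rw [← inv_inv C, this, inv_one])
  · -- involution
    intro π
    by_cases hQ : Q i0 g π
    · rw [hι]
      simp only [dif_pos hQ]
      by_cases hfix : ∀ a, i0.succAbove a ∈ K → π a = a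
      · rw [if_pos hfix]
        have hQ' := QC1 π hQ hfix
        simp only [dif_pos hQ']
        have hnot : ¬ ∀ a, i0.succAbove a ∈ K → (π * C) a = a := by
          intro hall
          apply hCne _ hpinu0K
          have := hall _ hpinu0K
          rw [Equiv.Perm.mul_apply] at this
          have h2 : i0.succAbove (C (pin i0 u0)) ∈ K := by
            rw [hCK _ hpinu0K]
            exact hKnxt _ hpinu0K
          rw [hfix _ h2] at this
          exact this
        rw [if_neg hnot, mul_assoc, mul_inv_cancel, mul_one]
      · rw [if_neg hfix]
        have hmv : ∀ a, i0.succAbove a ∈ K → π a = C a := (dich π hQ).resolve_left hfix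
        have hQ' := QC2 π hQ hmv
        simp only [dif_pos hQ']
        rw [if_pos (hτfix π hmv), mul_assoc, inv_mul_cancel, mul_one]
    · rw [hι]
      simp only [dif_neg hQ]

noncomputable def tree (i0 : Fin (m + 1)) (g : Fin m → Fin (m + 1)) :
    SimpleGraph (Fin (m + 1)) :=
  SimpleGraph.fromEdgeSet (Set.range fun a => s(i0.succAbove a, g a))

noncomputable def dep (i0 : Fin (m + 1)) (g : Fin m → Fin (m + 1)) (v : Fin (m + 1)) : ℕ :=
  if h : ∃ k, (nxt i0 g)^[k] v = i0 then Nat.find h else 0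

noncomputable def par (i0 : Fin (m + 1)) (T : SimpleGraph (Fin (m + 1))) (a : Fin m) :
    Fin (m + 1) :=
  if h : T.IsTree then
    ((h.existsUnique_path (i0.succAbove a) i0).exists.choose).getVert 1
  else i0

section DepFacts

variable {i0 : Fin (m + 1)} {g : Fin m → Fin (m + 1)} (hGood : Good i0 g)
include hGood

lemma dep_spec (v : Fin (m + 1)) : (nxt i0 g)^[dep i0 g v] v = i0 := by
  have h : ∃ k, (nxt i0 g)^[k] v = i0 := ⟨m, hGood v⟩
  rw [dep, dif_pos h]
  exact Nat.find_spec h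

lemma dep_le (v : Fin (m + 1)) {k : ℕ} (hk : (nxt i0 g)^[k] v = i0) : dep i0 g v ≤ k := by
  have h : ∃ k, (nxt i0 g)^[k] v = i0 := ⟨m, hGood v⟩
  rw [dep, dif_pos h]
  exact Nat.find_le hk

lemma dep_pos {v : Fin (m + 1)} (hv : v ≠ i0) : 0 < dep i0 g v := by
  rcases Nat.eq_zero_or_pos (dep i0 g v) with h | h
  · exfalso
    have := dep_spec hGood v
    rw [h, Function.iterate_zero_apply] at this
    exact hv this
  · exact h

lemma dep_i0_eq : dep i0 g i0 = 0 :=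
  Nat.le_zero.1 (dep_le hGood i0 (by rw [Function.iterate_zero_apply]))

lemma dep_nxt_lt {v : Fin (m + 1)} (hv : v ≠ i0) : dep i0 g (nxt i0 g v) < dep i0 g v := by
  have hpos := dep_pos hGood hv
  have hlt : dep i0 g (nxt i0 g v) ≤ dep i0 g v - 1 := by
    apply dep_le hGood
    rw [← Function.iterate_succ_apply (nxt i0 g) (dep i0 g v - 1) v,
      show (dep i0 g v - 1).succ = dep i0 g v from by omega]
    exact dep_spec hGood v
  omega

lemma edge_inj : Function.Injective (fun a => s(i0.succAbove a, g a)) := by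
  intro a b hab
  simp only [Sym2.eq_iff] at hab
  rcases hab with ⟨h1, _⟩ | ⟨h1, h2⟩
  · exact Fin.succAbove_right_injective h1
  · exfalso
    -- 2-cycle: nxt (σ a) = σ b, nxt (σ b) = σ a
    have hab1 : nxt i0 g (i0.succAbove a) = i0.succAbove b := by rw [nxt_succAbove, h2]
    have hab2 : nxt i0 g (i0.succAbove b) = i0.succAbove a := by rw [nxt_succAbove, ← h1]
    have h2per : ∀ k, (nxt i0 g)^[2 * k] (i0.succAbove a) = i0.succAbove a := by
      intro k
      induction k with
      | zero => rfl
      | succ k ih =>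
        rw [show 2 * (k + 1) = 2 + 2 * k by omega, Function.iterate_add_apply, ih,
          show (2 : ℕ) = 1 + 1 from rfl, Function.iterate_add_apply]
        simp [hab1, hab2]
    have : i0.succAbove a = i0 := by
      rw [← h2per m]
      exact iterate_absorb (hGood (i0.succAbove a)) (by omega)
    exact Fin.succAbove_ne i0 a this

lemma tree_edgeSet : (tree i0 g).edgeSet = Set.range fun a => s(i0.succAbove a, g a) := by
  rw [tree, SimpleGraph.edgeSet_fromEdgeSet]
  ext e
  simp only [Set.mem_diff, Set.mem_setOf_eq, and_iff_left_iff_imp]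
  rintro ⟨a, rfl⟩
  rw [Sym2.mem_diagSet, Sym2.mk_isDiag_iff]
  exact fun h => good_ne i0 hGood a h.symm

lemma tree_adj {x y : Fin (m + 1)} :
    (tree i0 g).Adj x y ↔ (∃ a, s(i0.succAbove a, g a) = s(x, y)) ∧ x ≠ y := by
  rw [tree, SimpleGraph.fromEdgeSet_adj]
  constructor
  · rintro ⟨⟨a, ha⟩, hne⟩
    exact ⟨⟨a, ha⟩, hne⟩
  · rintro ⟨⟨a, ha⟩, hne⟩
    exact ⟨⟨a, ha⟩, hne⟩

/-- Canonical path from any vertex to `i0` in `tree i0 g`. -/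
lemma canonical_path : ∀ (n : ℕ) (v : Fin (m + 1)), dep i0 g v ≤ n →
    ∃ p : (tree i0 g).Walk v i0, p.IsPath ∧ (∀ u ∈ p.support, dep i0 g u ≤ dep i0 g v) ∧
      p.getVert 1 = nxt i0 g v := by
  intro n
  induction n with
  | zero =>
    intro v hv
    have hvi0 : v = i0 := by
      by_contra h
      have := dep_pos hGood h
      omega
    subst hvi0
    refine ⟨SimpleGraph.Walk.nil, SimpleGraph.Walk.IsPath.nil, ?_, ?_⟩
    · intro u hu
      simp only [SimpleGraph.Walk.support_nil, List.mem_singleton] at hu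
      subst hu; exact le_refl _
    · rw [nxt_i0]; rfl
  | succ n ih =>
    intro v hv
    by_cases hvi0 : v = i0
    · subst hvi0
      refine ⟨SimpleGraph.Walk.nil, SimpleGraph.Walk.IsPath.nil, ?_, ?_⟩
      · intro u hu
        simp only [SimpleGraph.Walk.support_nil, List.mem_singleton] at hu
        subst hu; exact le_refl _
      · rw [nxt_i0]; rfl
    · obtain ⟨a, rfl⟩ := Fin.exists_succAbove_eq hvi0
      have hadj : (tree i0 g).Adj (i0.succAbove a) (g a) := by
        rw [tree_adj hGood]
        exact ⟨⟨a, rfl⟩, Ne.symm (good_ne i0 hGood a)⟩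
      have hdlt : dep i0 g (g a) < dep i0 g (i0.succAbove a) := by
        have := dep_nxt_lt hGood (v := i0.succAbove a) (Fin.succAbove_ne i0 a)
        rwa [nxt_succAbove] at this
      obtain ⟨q, hq, hqsup, _⟩ := ih (g a) (by omega)
      refine ⟨SimpleGraph.Walk.cons hadj q, ?_, ?_, ?_⟩
      · rw [SimpleGraph.Walk.cons_isPath_iff]
        refine ⟨hq, fun hmem => ?_⟩
        have := hqsup _ hmem
        omega
      · intro u hu
        rw [SimpleGraph.Walk.support_cons, List.mem_cons] at hu
        rcases hu with rfl | hu
        · exact le_refl _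
        · exact le_of_lt (lt_of_le_of_lt (hqsup u hu) hdlt)
      · rw [SimpleGraph.Walk.getVert_cons _ _ one_ne_zero, nxt_succAbove]
        exact q.getVert_zero

lemma tree_connected : (tree i0 g).Connected := by
  rw [SimpleGraph.connected_iff]
  refine ⟨fun u v => ?_, ⟨i0⟩⟩
  obtain ⟨p, _, _, _⟩ := canonical_path hGood (dep i0 g u) u (le_refl _)
  obtain ⟨q, _, _, _⟩ := canonical_path hGood (dep i0 g v) v (le_refl _)
  exact p.reachable.trans q.reachable.symm

lemma tree_acyclic : (tree i0 g).IsAcyclic := by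
  intro v c hc
  rw [SimpleGraph.Walk.isCycle_def] at hc
  obtain ⟨htrail, hnil, hnodup⟩ := hc
  cases c with
  | nil => exact hnil rfl
  | cons hadj q =>
    -- support finset
    set S := q.support.toFinset with hS
    have hsuptail : (SimpleGraph.Walk.cons hadj q).support.tail = q.support := by
      rw [SimpleGraph.Walk.support_cons]; rfl
    rw [hsuptail] at hnodup
    have hcardS : S.card = q.length + 1 := by
      rw [hS, List.toFinset_card_of_nodup hnodup, SimpleGraph.Walk.length_support]
    have hmemS : ∀ x ∈ (SimpleGraph.Walk.cons hadj q).support, x ∈ S := by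
      intro x hx
      rw [SimpleGraph.Walk.support_cons, List.mem_cons] at hx
      rcases hx with rfl | hx
      · exact List.mem_toFinset.2 (SimpleGraph.Walk.end_mem_support q)
      · exact List.mem_toFinset.2 hx
    -- edges
    set c' := SimpleGraph.Walk.cons hadj q with hc'
    set A := univ.filter (fun a => s(i0.succAbove a, g a) ∈ c'.edges) with hA
    have hEA : c'.edges.toFinset = A.image (fun a => s(i0.succAbove a, g a)) := by
      ext e
      rw [List.mem_toFinset, Finset.mem_image]
      constructor
      · intro he
        have : e ∈ (tree i0 g).edgeSet := SimpleGraph.Walk.edges_subset_edgeSet c' he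
        rw [tree_edgeSet hGood] at this
        obtain ⟨a, rfl⟩ := this
        exact ⟨a, Finset.mem_filter.2 ⟨Finset.mem_univ _, he⟩, rfl⟩
      · rintro ⟨a, ha, rfl⟩
        exact (Finset.mem_filter.1 ha).2
    have hcardE : c'.edges.toFinset.card = q.length + 1 := by
      rw [List.toFinset_card_of_nodup htrail.edges_nodup, SimpleGraph.Walk.length_edges, hc',
        SimpleGraph.Walk.length_cons]
    have hcardA : A.card = q.length + 1 := by
      rw [← hcardE, hEA]
      exact (Finset.card_image_of_injective A (edge_inj hGood)).symm
    set I := A.image (fun a => i0.succAbove a) with hI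
    have hcardI : I.card = q.length + 1 := by
      rw [hI, Finset.card_image_of_injective A Fin.succAbove_right_injective, hcardA]
    have hIS : I ⊆ S := by
      intro x hx
      rw [hI, Finset.mem_image] at hx
      obtain ⟨a, ha, rfl⟩ := hx
      exact hmemS _ (SimpleGraph.Walk.fst_mem_support_of_mem_edges c' (Finset.mem_filter.1 ha).2)
    have hISeq : I = S := Finset.eq_of_subset_of_card_le hIS (by omega)
    -- minimum depth vertex
    obtain ⟨x, hxS, hxmin⟩ := Finset.exists_min_image S (dep i0 g)
      ⟨v, hmemS _ (SimpleGraph.Walk.start_mem_support c')⟩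
    rw [← hISeq, hI, Finset.mem_image] at hxS
    obtain ⟨a, ha, rfl⟩ := hxS
    have hga : g a ∈ S :=
      hmemS _ (SimpleGraph.Walk.snd_mem_support_of_mem_edges c' (Finset.mem_filter.1 ha).2)
    have h1 : dep i0 g (g a) < dep i0 g (i0.succAbove a) := by
      have := dep_nxt_lt hGood (v := i0.succAbove a) (Fin.succAbove_ne i0 a)
      rwa [nxt_succAbove] at this
    have h2 := hxmin _ hga
    omega

lemma tree_isTree : (tree i0 g).IsTree :=
  ⟨tree_connected hGood, tree_acyclic hGood⟩

lemma par_tree_eq : par i0 (tree i0 g) = g := by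
  funext a
  rw [par, dif_pos (tree_isTree hGood)]
  obtain ⟨p, hp, _, hp1⟩ :=
    canonical_path hGood (dep i0 g (i0.succAbove a)) (i0.succAbove a) (le_refl _)
  have huniq := ((tree_isTree hGood).existsUnique_path (i0.succAbove a) i0).unique
    (((tree_isTree hGood).existsUnique_path (i0.succAbove a) i0).exists.choose_spec) hp
  rw [huniq, hp1, nxt_succAbove]

end DepFacts

/-- Tree-path length to `i0`. -/
noncomputable def len (i0 : Fin (m + 1)) (T : SimpleGraph (Fin (m + 1))) (v : Fin (m + 1)) :
    ℕ :=
  if h : T.IsTree then (h.existsUnique_path v i0).exists.choose.length else 0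

section TreeFacts

variable {i0 : Fin (m + 1)} {T : SimpleGraph (Fin (m + 1))} (hT : T.IsTree)
include hT

lemma par_adj_len (a : Fin m) : T.Adj (i0.succAbove a) (par i0 T a) ∧
    len i0 T (par i0 T a) + 1 = len i0 T (i0.succAbove a) := by
  set p := (hT.existsUnique_path (i0.succAbove a) i0).exists.choose with hp
  have hppath : p.IsPath := (hT.existsUnique_path (i0.succAbove a) i0).exists.choose_spec
  obtain ⟨x, hadj, q, hpq⟩ :=
    SimpleGraph.Walk.exists_eq_cons_of_ne (Fin.succAbove_ne i0 a) p
  have hpar : par i0 T a = x := by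
    rw [par, dif_pos hT, ← hp, hpq, SimpleGraph.Walk.getVert_cons _ _ one_ne_zero]
    exact q.getVert_zero
  have hqpath : q.IsPath := by
    rw [hpq] at hppath
    exact hppath.of_cons
  have hqf : (hT.existsUnique_path x i0).exists.choose = q :=
    (hT.existsUnique_path x i0).unique ((hT.existsUnique_path x i0).exists.choose_spec) hqpath
  constructor
  · rw [hpar]; exact hadj
  · rw [hpar, len, len, dif_pos hT, dif_pos hT, hqf, ← hp, hpq]
    rfl

lemma len_le (v : Fin (m + 1)) : len i0 T v ≤ m := by
  rw [len, dif_pos hT]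
  have := ((hT.existsUnique_path v i0).exists.choose_spec).length_lt
  rw [Fintype.card_fin] at this
  omega

lemma len_eq_zero {v : Fin (m + 1)} (h : len i0 T v = 0) : v = i0 := by
  rw [len, dif_pos hT] at h
  exact SimpleGraph.Walk.eq_of_length_eq_zero h

lemma good_par : Good i0 (par i0 T) := by
  have key : ∀ (n : ℕ) (v : Fin (m + 1)), len i0 T v ≤ n →
      (nxt i0 (par i0 T))^[n] v = i0 := by
    intro n
    induction n with
    | zero =>
      intro v hv
      exact len_eq_zero hT (Nat.le_zero.1 hv)
    | succ n ih =>
      intro v hv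
      by_cases hvi0 : v = i0
      · rw [hvi0]; exact iterate_nxt_i0 _ _ _
      · obtain ⟨a, rfl⟩ := Fin.exists_succAbove_eq hvi0
        rw [Function.iterate_succ_apply, nxt_succAbove]
        apply ih
        have := (par_adj_len hT (i0 := i0) a).2
        omega
  exact fun v => key m v (len_le hT v)

lemma adj_par_edge {x y : Fin (m + 1)} (hxy : T.Adj x y)
    (hnot : y ∉ ((hT.existsUnique_path x i0).exists.choose).support) :
    ∃ a, i0.succAbove a = y ∧ par i0 T a = x := by
  set p := (hT.existsUnique_path x i0).exists.choose with hp
  have hppath : p.IsPath := (hT.existsUnique_path x i0).exists.choose_spec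
  have hyne : y ≠ i0 := by
    intro h
    exact hnot (h ▸ p.end_mem_support)
  obtain ⟨a, ha⟩ := Fin.exists_succAbove_eq hyne
  refine ⟨a, ha, ?_⟩
  set W := SimpleGraph.Walk.cons hxy.symm p with hW
  have hWpath : W.IsPath := by
    rw [hW, SimpleGraph.Walk.cons_isPath_iff]
    exact ⟨hppath, hnot⟩
  have hWf : (hT.existsUnique_path y i0).exists.choose = W :=
    (hT.existsUnique_path y i0).unique ((hT.existsUnique_path y i0).exists.choose_spec) hWpath
  rw [par, dif_pos hT]
  have : (hT.existsUnique_path (i0.succAbove a) i0).exists.choose.getVert 1 =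
      (hT.existsUnique_path y i0).exists.choose.getVert 1 := by
    congr 1 <;> rw [ha]
  rw [this, hWf, hW, SimpleGraph.Walk.getVert_cons _ _ one_ne_zero]
  exact p.getVert_zero

lemma edge_dichotomy {x y : Fin (m + 1)} (hxy : T.Adj x y) :
    ∃ a, s(i0.succAbove a, par i0 T a) = s(x, y) := by
  set px := (hT.existsUnique_path x i0).exists.choose with hpx
  set py := (hT.existsUnique_path y i0).exists.choose with hpy
  have hpxpath : px.IsPath := (hT.existsUnique_path x i0).exists.choose_spec
  have hpypath : py.IsPath := (hT.existsUnique_path y i0).exists.choose_spec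
  by_cases hy : y ∈ px.support
  · -- then x ∉ py.support
    have hq : (px.dropUntil y hy).IsPath := hpxpath.dropUntil hy
    have hpyq : py = px.dropUntil y hy :=
      (hT.existsUnique_path y i0).unique ((hT.existsUnique_path y i0).exists.choose_spec) hq
    have hxnot : x ∉ py.support := by
      rw [hpyq]
      intro hxq
      have hnodup : ((px.takeUntil y hy).append (px.dropUntil y hy)).support.Nodup := by
        rw [SimpleGraph.Walk.take_spec px hy]
        exact hpxpath.support_nodup
      rw [SimpleGraph.Walk.support_append] at hnodup
      rw [SimpleGraph.Walk.support_eq_cons (px.dropUntil y hy), List.mem_cons] at hxq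
      rcases hxq with rfl | hxq
      · exact hxy.ne rfl
      · exact (List.disjoint_of_nodup_append hnodup)
          (SimpleGraph.Walk.start_mem_support _) hxq
    obtain ⟨a, ha1, ha2⟩ := adj_par_edge hT hxy.symm hxnot
    exact ⟨a, by rw [ha1, ha2]⟩
  · obtain ⟨a, ha1, ha2⟩ := adj_par_edge hT hxy hy
    exact ⟨a, by rw [ha1, ha2, Sym2.eq_swap]⟩

lemma tree_par_eq : tree i0 (par i0 T) = T := by
  apply le_antisymm
  · intro x y hxy
    rw [tree_adj (good_par hT)] at hxy
    obtain ⟨⟨a, ha⟩, hne⟩ := hxy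
    rw [Sym2.eq_iff] at ha
    rcases ha with ⟨h1, h2⟩ | ⟨h1, h2⟩
    · rw [← h1, ← h2]
      exact (par_adj_len hT a).1
    · rw [← h1, ← h2]
      exact (par_adj_len hT a).1.symm
  · intro x y hxy
    rw [tree_adj (good_par hT)]
    exact ⟨edge_dichotomy hT hxy, hxy.ne⟩

end TreeFacts

lemma tree_prod {R : Type*} [CommRing R] {i0 : Fin (m + 1)} {g : Fin m → Fin (m + 1)}
    (hGood : Good i0 g) (w : Fin (m + 1) → Fin (m + 1) → R) (hsym : ∀ i j, w i j = w j i) :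
    ∏ e ∈ (tree i0 g).edgeFinset, Sym2.lift ⟨w, hsym⟩ e =
      ∏ a, w (i0.succAbove a) (g a) := by
  have hef : (tree i0 g).edgeFinset = univ.image (fun a => s(i0.succAbove a, g a)) := by
    ext e
    rw [SimpleGraph.mem_edgeFinset, tree_edgeSet hGood, Finset.mem_image]
    constructor
    · rintro ⟨a, rfl⟩; exact ⟨a, Finset.mem_univ _, rfl⟩
    · rintro ⟨a, _, rfl⟩; exact ⟨a, rfl⟩
  rw [hef, Finset.prod_image (fun a _ b _ h => edge_inj hGood h)]
  exact Finset.prod_congr rfl fun a _ => Sym2.lift_mk _ _ _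


end MTaux

open scoped Classical in
/-- Multivariate Matrix-Tree theorem: for the weighted Laplacian `L` of the complete graph
on `N = m + 1` vertices (with symmetric weights `w i j`), the determinant of the principal
minor obtained by deleting row and column `i₀` equals the sum over all spanning trees `T`
of the complete graph of `∏_{{i,j} ∈ E(T)} w i j`. -/
theorem matrix_tree_multivariate
    (m : ℕ) (R : Type*) [CommRing R]
    (w : Fin (m + 1) → Fin (m + 1) → R) (hsym : ∀ i j, w i j = w j i)
    (i0 : Fin (m + 1)) :
    Matrix.det
      ((Matrix.of (fun i j : Fin (m + 1) =>
        if i = j then ∑ k ∈ Finset.univ.erase i, w i k else - w i j)).submatrix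
          i0.succAbove i0.succAbove)
      = ∑ T ∈ Finset.univ.filter (fun T : SimpleGraph (Fin (m + 1)) => T.IsTree),
          ∏ e ∈ T.edgeFinset, Sym2.lift ⟨w, hsym⟩ e := by
  classical
  cases m with
  | zero =>
    have hbot : (⊥ : SimpleGraph (Fin 1)).IsTree := by
      constructor
      · rw [SimpleGraph.connected_iff]
        exact ⟨fun u v => by rw [Subsingleton.elim u v], ⟨i0⟩⟩
      · exact SimpleGraph.isAcyclic_bot
    have hfil : (Finset.univ.filter (fun T : SimpleGraph (Fin 1) => T.IsTree)) = {⊥} := by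
      ext T
      simp only [Finset.mem_filter, Finset.mem_univ, true_and, Finset.mem_singleton]
      constructor
      · intro _
        ext x y
        simp only [SimpleGraph.bot_adj, iff_false]
        intro h
        exact h.ne (Subsingleton.elim x y)
      · rintro rfl
        exact hbot
    rw [hfil, Finset.sum_singleton, Matrix.det_isEmpty]
    refine (Finset.prod_eq_one fun e he => ?_).symm
    exfalso
    simp only [SimpleGraph.mem_edgeFinset, SimpleGraph.edgeSet_bot] at he
    exact absurd he (Set.notMem_empty e)
  | succ m =>
    rw [MTaux.det_expand i0 w]
    have step : ∀ g : Fin (m + 1) → Fin (m + 2),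
        (∑ π : Equiv.Perm (Fin (m + 1)),
          (if MTaux.Q i0 g π then MTaux.E R π * ∏ a, w (i0.succAbove a) (g a) else 0)) =
        (if MTaux.Good i0 g then ∏ a, w (i0.succAbove a) (g a) else 0) := by
      intro g
      have hsplit : ∀ π : Equiv.Perm (Fin (m + 1)),
          (if MTaux.Q i0 g π then MTaux.E R π * ∏ a, w (i0.succAbove a) (g a) else 0) =
          (if MTaux.Q i0 g π then MTaux.E R π else 0) * ∏ a, w (i0.succAbove a) (g a) := by
        intro π
        split <;> simp
      rw [Finset.sum_congr rfl fun π _ => hsplit π, ← Finset.sum_mul]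
      by_cases hGood : MTaux.Good i0 g
      · rw [MTaux.sum_perm_good R hGood, one_mul, if_pos hGood]
      · rw [MTaux.sum_perm_not_good R hGood, zero_mul, if_neg hGood]
    rw [Finset.sum_congr rfl fun g _ => step g, ← Finset.sum_filter]
    refine Finset.sum_nbij' (fun g => MTaux.tree i0 g) (fun T => MTaux.par i0 T)
      ?_ ?_ ?_ ?_ ?_
    · intro g hg
      rw [Finset.mem_filter] at hg ⊢
      exact ⟨Finset.mem_univ _, MTaux.tree_isTree hg.2⟩
    · intro T hT
      rw [Finset.mem_filter] at hT ⊢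
      exact ⟨Finset.mem_univ _, MTaux.good_par hT.2⟩
    · intro g hg
      rw [Finset.mem_filter] at hg
      exact MTaux.par_tree_eq hg.2
    · intro T hT
      rw [Finset.mem_filter] at hT
      exact MTaux.tree_par_eq hT.2
    · intro g hg
      rw [Finset.mem_filter] at hg
      exact (MTaux.tree_prod hg.2 w hsym).symm
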